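/- Let $p$ be a prime. The set $\mathbb{N}$ equipped with addition $\vee = \max$ and multiplication $\wedge$ (defined by $u \wedge v = \max\{a+b+1 : 0 \leq a \leq u-1,\ 0 \leq b \leq v-1,\ p \nmid \binom{a+b}{a}\}$ for $u, v \geq 1$, and $0 \wedge v = u \wedge 0 = 0$) is a commutative semiring with additive identity $0$ and multiplicative identity $1$. -/

import Mathlib

/-- `wedge p u v` is the maximum of `a + b + 1` over `0 ≤ a ≤ u-1`, `0 ≤ b ≤ v-1`
with `p ∤ (a+b).choose a`, extended by `wedge p 0 v = wedge p u 0 = 0`. -/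
def wedge (p u v : ℕ) : ℕ :=
  if u = 0 ∨ v = 0 then 0
  else ((Finset.range u ×ˢ Finset.range v).filter
      (fun ab => ¬ p ∣ Nat.choose (ab.1 + ab.2) ab.1)).sup
      (fun ab => ab.1 + ab.2 + 1)

/-- the `m`-th base-`p` digit of `n`. -/
def digit (p m n : ℕ) : ℕ := n / p ^ m % p

section Aux

/-- carry-free addition of `a` and `b` in base `p`. -/
def CF (p a b : ℕ) : Prop := ∀ i, a % p ^ i + b % p ^ i < p ^ i

variable {p a b c d s t u v w u' : ℕ}

lemma CF.symm (h : CF p a b) : CF p b a := fun i => by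
  have := h i; omega

lemma cf_zero_left (hp : p.Prime) (b : ℕ) : CF p 0 b := fun i => by
  simpa using Nat.mod_lt b (pow_pos hp.pos i)

lemma CF.add_mod (h : CF p a b) (i : ℕ) : (a + b) % p ^ i = a % p ^ i + b % p ^ i := by
  rw [Nat.add_mod]; exact Nat.mod_eq_of_lt (h i)

lemma cf_iff_not_dvd (hp : p.Prime) (a b : ℕ) :
    CF p a b ↔ ¬ p ∣ Nat.choose (a + b) a := by
  have hlog : Nat.log p (b + a) < a + b + 1 :=
    lt_of_le_of_lt (Nat.log_le_self p _) (by omega)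
  have hch : Nat.choose (a + b) a = Nat.choose (b + a) a := by rw [Nat.add_comm]
  rw [hch, ← emultiplicity_eq_zero, Nat.Prime.emultiplicity_choose' hp hlog]
  simp only [Nat.cast_eq_zero, Finset.card_eq_zero, Finset.filter_eq_empty_iff,
    Finset.mem_Ico, not_le]
  constructor
  · intro h i _; exact h i
  · intro h i
    rcases Nat.eq_zero_or_pos i with rfl | hi
    · simp only [pow_zero]; omega
    rcases lt_or_ge i (a + b + 1) with hil | hil
    · exact h ⟨hi, hil⟩
    · have h2 : a + b < 2 ^ i := lt_of_lt_of_le (by omega) (Nat.lt_two_pow_self (n := i)).le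
      have hple : (2:ℕ) ^ i ≤ p ^ i := Nat.pow_le_pow_left hp.two_le i
      have hma := Nat.mod_le a (p ^ i)
      have hmb := Nat.mod_le b (p ^ i)
      omega

lemma cf_sub_one (hp : p.Prime) {j : ℕ} (h : CF p a b) (hjb : p ^ j ∣ b)
    (ha : a % p ^ (j + 1) ≠ 0) : 1 ≤ a ∧ CF p (a - 1) b := by
  have ha1 : 1 ≤ a := by
    rcases Nat.eq_zero_or_pos a with rfl | h1
    · simp at ha
    · exact h1
  refine ⟨ha1, fun i => ?_⟩
  have hppos : 0 < p ^ i := pow_pos hp.pos i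
  rcases le_or_gt i j with hij | hij
  · have hbz : b % p ^ i = 0 :=
      Nat.mod_eq_zero_of_dvd (dvd_trans (pow_dvd_pow p hij) hjb)
    have hlt := Nat.mod_lt (a - 1) hppos
    omega
  · have hai : a % p ^ i ≠ 0 := by
      intro h0
      exact ha (Nat.mod_eq_zero_of_dvd
        (dvd_trans (pow_dvd_pow p hij) (Nat.dvd_of_mod_eq_zero h0)))
    have hdm := Nat.div_add_mod a (p ^ i)
    have hmlt := Nat.mod_lt a hppos
    have hbm := h i
    set P := p ^ i with hP
    set r := a % P with hr
    set q := a / P with hq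
    have hrw : a - 1 = P * q + (r - 1) := by omega
    have hmod : (a - 1) % P = r - 1 := by
      rw [hrw, Nat.mul_add_mod]
      exact Nat.mod_eq_of_lt (by omega)
    omega

lemma cf_decrement (hp : p.Prime) (h : CF p a b) (hs : a + b = s + 1) :
    ∃ a' b', a' ≤ a ∧ b' ≤ b ∧ a' + b' = s ∧ CF p a' b' := by
  haveI : Fact p.Prime := ⟨hp⟩
  have hdvd : p ^ padicValNat p (s + 1) ∣ s + 1 := pow_padicValNat_dvd
  have hndvd : ¬ p ^ (padicValNat p (s + 1) + 1) ∣ s + 1 :=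
    pow_succ_padicValNat_not_dvd (by omega)
  set j := padicValNat p (s + 1) with hj
  have hmodj : a % p ^ j = 0 ∧ b % p ^ j = 0 := by
    have h1 : (a + b) % p ^ j = 0 := by
      rw [hs]; exact Nat.mod_eq_zero_of_dvd hdvd
    rw [h.add_mod] at h1
    exact Nat.add_eq_zero.mp h1
  have hja : p ^ j ∣ a := Nat.dvd_of_mod_eq_zero hmodj.1
  have hjb : p ^ j ∣ b := Nat.dvd_of_mod_eq_zero hmodj.2
  have hne : a % p ^ (j + 1) + b % p ^ (j + 1) ≠ 0 := by
    rw [← h.add_mod, hs]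
    intro h0
    exact hndvd (Nat.dvd_of_mod_eq_zero h0)
  rcases Nat.eq_zero_or_pos (a % p ^ (j + 1)) with haz | hapos
  · have hbne : b % p ^ (j + 1) ≠ 0 := by
      intro h0; rw [haz, h0] at hne; exact hne rfl
    obtain ⟨hb1, hcf⟩ := cf_sub_one hp h.symm hja hbne
    exact ⟨a, b - 1, le_refl _, Nat.sub_le _ _, by omega, hcf.symm⟩
  · obtain ⟨ha1, hcf⟩ := cf_sub_one hp h hjb (by omega)
    exact ⟨a - 1, b, Nat.sub_le _ _, le_refl _, by omega, hcf⟩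

/-- achievability predicate for `wedge`. -/
def B (p u v s : ℕ) : Prop := ∃ a b, a < u ∧ b < v ∧ CF p a b ∧ a + b + 1 = s

lemma B.symm (h : B p u v s) : B p v u s := by
  obtain ⟨a, b, ha, hb, hcf, hs⟩ := h
  exact ⟨b, a, hb, ha, hcf.symm, by omega⟩

lemma wedge_eq (hu : u ≠ 0) (hv : v ≠ 0) :
    wedge p u v = ((Finset.range u ×ˢ Finset.range v).filter
      (fun ab => ¬ p ∣ Nat.choose (ab.1 + ab.2) ab.1)).sup
      (fun ab => ab.1 + ab.2 + 1) := by
  simp [wedge, hu, hv]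

lemma B_le_wedge (hp : p.Prime) (h : B p u v s) : s ≤ wedge p u v := by
  obtain ⟨a, b, ha, hb, hcf, hs⟩ := h
  rw [wedge_eq (by omega) (by omega)]
  have hmem : (a, b) ∈ (Finset.range u ×ˢ Finset.range v).filter
      (fun ab => ¬ p ∣ Nat.choose (ab.1 + ab.2) ab.1) := by
    simp only [Finset.mem_filter, Finset.mem_product, Finset.mem_range]
    exact ⟨⟨ha, hb⟩, (cf_iff_not_dvd hp a b).1 hcf⟩
  have := Finset.le_sup (f := fun ab : ℕ × ℕ => ab.1 + ab.2 + 1) hmem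
  simpa [← hs] using this

lemma B_wedge (hp : p.Prime) (hu : u ≠ 0) (hv : v ≠ 0) : B p u v (wedge p u v) := by
  have hmem : (0, 0) ∈ (Finset.range u ×ˢ Finset.range v).filter
      (fun ab => ¬ p ∣ Nat.choose (ab.1 + ab.2) ab.1) := by
    simp only [Finset.mem_filter, Finset.mem_product, Finset.mem_range]
    exact ⟨⟨by omega, by omega⟩, (cf_iff_not_dvd hp 0 0).1 (cf_zero_left hp 0)⟩
  obtain ⟨⟨a, b⟩, hab, heq⟩ := Finset.exists_mem_eq_sup _ ⟨_, hmem⟩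
      (fun ab : ℕ × ℕ => ab.1 + ab.2 + 1)
  simp only [Finset.mem_filter, Finset.mem_product, Finset.mem_range] at hab
  exact ⟨a, b, hab.1.1, hab.1.2, (cf_iff_not_dvd hp a b).2 hab.2,
    by rw [wedge_eq hu hv, heq]⟩

lemma B_one (hp : p.Prime) (hu : u ≠ 0) (hv : v ≠ 0) : B p u v 1 :=
  ⟨0, 0, by omega, by omega, cf_zero_left hp 0, rfl⟩

lemma B_of_le (hp : p.Prime) (h1 : 1 ≤ s) (hst : s ≤ t) (hB : B p u v t) : B p u v s := by
  obtain ⟨k, rfl⟩ : ∃ k, t = s + k := ⟨t - s, by omega⟩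
  clear hst
  induction k with
  | zero => exact hB
  | succ n ih =>
    apply ih
    obtain ⟨a, b, ha, hb, hcf, hs'⟩ := hB
    have hab : a + b = (s + n - 1) + 1 := by omega
    obtain ⟨a', b', ha', hb', hab', hcf'⟩ := cf_decrement hp hcf hab
    exact ⟨a', b', by omega, by omega, hcf', by omega⟩

lemma B_iff (hp : p.Prime) (hu : u ≠ 0) (hv : v ≠ 0) :
    B p u v s ↔ 1 ≤ s ∧ s ≤ wedge p u v := by
  constructor
  · intro h
    obtain ⟨a, b, _, _, _, hs⟩ := h
    refine ⟨by omega, B_le_wedge hp ?_⟩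
    exact ⟨a, b, by assumption, by assumption, by assumption, hs⟩
  · rintro ⟨h1, h2⟩
    exact B_of_le hp h1 h2 (B_wedge hp hu hv)

lemma wedge_zero_left (p v : ℕ) : wedge p 0 v = 0 := by simp [wedge]

lemma wedge_zero_right (p u : ℕ) : wedge p u 0 = 0 := by simp [wedge]

lemma wedge_pos (hp : p.Prime) (hu : u ≠ 0) (hv : v ≠ 0) : 1 ≤ wedge p u v :=
  B_le_wedge hp (B_one hp hu hv)

lemma wedge_comm' (hp : p.Prime) (u v : ℕ) : wedge p u v = wedge p v u := by
  rcases Nat.eq_zero_or_pos u with rfl | hu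
  · rw [wedge_zero_left, wedge_zero_right]
  rcases Nat.eq_zero_or_pos v with rfl | hv
  · rw [wedge_zero_left, wedge_zero_right]
  exact le_antisymm (B_le_wedge hp (B_wedge hp (by omega) (by omega)).symm)
    (B_le_wedge hp (B_wedge hp (by omega) (by omega)).symm)

lemma wedge_mono_left (hp : p.Prime) (h : u ≤ u') : wedge p u v ≤ wedge p u' v := by
  rcases Nat.eq_zero_or_pos u with rfl | hu
  · simp [wedge_zero_left]
  rcases Nat.eq_zero_or_pos v with rfl | hv
  · simp [wedge_zero_right]
  obtain ⟨a, b, ha, hb, hcf, hs⟩ := B_wedge hp (by omega : u ≠ 0) (by omega : v ≠ 0)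
  exact B_le_wedge hp ⟨a, b, by omega, hb, hcf, hs⟩

lemma wedge_one_left (hp : p.Prime) (v : ℕ) : wedge p 1 v = v := by
  rcases Nat.eq_zero_or_pos v with rfl | hv
  · exact wedge_zero_right p 1
  refine le_antisymm ?_ ?_
  · obtain ⟨a, b, ha, hb, hcf, hs⟩ := B_wedge hp one_ne_zero hv.ne'
    omega
  · exact B_le_wedge hp ⟨0, v - 1, by omega, by omega, cf_zero_left hp _, by omega⟩

/-- triple carry-free condition. -/
def T3 (p a b c : ℕ) : Prop := ∀ i, a % p ^ i + b % p ^ i + c % p ^ i < p ^ i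

lemma T3.cf12 (h : T3 p a b c) : CF p a b := fun i =>
  Nat.lt_of_le_of_lt (Nat.le_add_right _ _) (h i)

lemma T3.cf23 (h : T3 p a b c) : CF p b c := fun i => by
  have hi := h i
  rw [add_assoc] at hi
  exact Nat.lt_of_le_of_lt (Nat.le_add_left _ _) hi

lemma T3_of_left (h1 : CF p a b) (h2 : CF p (a + b) c) : T3 p a b c := fun i => by
  have hi := h2 i
  rw [h1.add_mod i] at hi
  exact hi

lemma T3_of_right (h1 : CF p b c) (h2 : CF p a (b + c)) : T3 p a b c := fun i => by
  have hi := h2 i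
  rw [h1.add_mod i, ← add_assoc] at hi
  exact hi

lemma T3.cf_left (h : T3 p a b c) : CF p (a + b) c := fun i => by
  rw [h.cf12.add_mod i]; exact h i

lemma T3.cf_right (h : T3 p a b c) : CF p a (b + c) := fun i => by
  rw [h.cf23.add_mod i, ← add_assoc]; exact h i

/-- triple achievability. -/
def B3 (p u v w s : ℕ) : Prop :=
  ∃ a b c, a < u ∧ b < v ∧ c < w ∧ T3 p a b c ∧ a + b + c + 1 = s

lemma B3_iff_left (hp : p.Prime) (hu : u ≠ 0) (hv : v ≠ 0) (hw : w ≠ 0) :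
    B3 p u v w s ↔ B p (wedge p u v) w s := by
  constructor
  · rintro ⟨a, b, c, ha, hb, hc, hT, hs⟩
    have hd : a + b < wedge p u v := by
      have := B_le_wedge hp (⟨a, b, ha, hb, hT.cf12, rfl⟩ : B p u v (a + b + 1))
      omega
    exact ⟨a + b, c, hd, hc, hT.cf_left, by omega⟩
  · rintro ⟨d, c, hd, hc, hcf, hs⟩
    have hBd : B p u v (d + 1) := (B_iff hp hu hv).2 ⟨by omega, by omega⟩
    obtain ⟨a, b, ha, hb, hab, habd⟩ := hBd
    have hd' : a + b = d := by omega
    subst hd'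
    exact ⟨a, b, c, ha, hb, hc, T3_of_left hab hcf, by omega⟩

lemma B3_iff_right (hp : p.Prime) (hu : u ≠ 0) (hv : v ≠ 0) (hw : w ≠ 0) :
    B3 p u v w s ↔ B p u (wedge p v w) s := by
  constructor
  · rintro ⟨a, b, c, ha, hb, hc, hT, hs⟩
    have hd : b + c < wedge p v w := by
      have := B_le_wedge hp (⟨b, c, hb, hc, hT.cf23, rfl⟩ : B p v w (b + c + 1))
      omega
    exact ⟨a, b + c, ha, hd, hT.cf_right, by omega⟩
  · rintro ⟨a, d, ha, hd, hcf, hs⟩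
    have hBd : B p v w (d + 1) := (B_iff hp hv hw).2 ⟨by omega, by omega⟩
    obtain ⟨b, c, hb, hc, hbc, hbcd⟩ := hBd
    have hd' : b + c = d := by omega
    subst hd'
    exact ⟨a, b, c, ha, hb, hc, T3_of_right hbc hcf, by omega⟩

lemma wedge_assoc (hp : p.Prime) (u v w : ℕ) :
    wedge p (wedge p u v) w = wedge p u (wedge p v w) := by
  rcases Nat.eq_zero_or_pos u with rfl | hu
  · simp [wedge_zero_left]
  rcases Nat.eq_zero_or_pos v with rfl | hv
  · simp [wedge_zero_left, wedge_zero_right]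
  rcases Nat.eq_zero_or_pos w with rfl | hw
  · simp [wedge_zero_right]
  have hu' : u ≠ 0 := by omega
  have hv' : v ≠ 0 := by omega
  have hw' : w ≠ 0 := by omega
  have huv : wedge p u v ≠ 0 := by have := wedge_pos hp hu' hv'; omega
  have hvw : wedge p v w ≠ 0 := by have := wedge_pos hp hv' hw'; omega
  refine le_antisymm ?_ ?_
  · exact B_le_wedge hp ((B3_iff_right hp hu' hv' hw').1
      ((B3_iff_left hp hu' hv' hw').2 (B_wedge hp huv hw')))
  · exact B_le_wedge hp ((B3_iff_left hp hu' hv' hw').1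
      ((B3_iff_right hp hu' hv' hw').2 (B_wedge hp hu' hvw)))

end Aux

/-- `ℕ` with addition `max` and multiplication `wedge p` is a commutative semiring. -/
theorem stmt_12 (p : ℕ) (hp : p.Prime) :
    (∀ u v : ℕ, max u v = max v u) ∧
    (∀ u v w : ℕ, max (max u v) w = max u (max v w)) ∧
    (∀ u : ℕ, max 0 u = u) ∧
    (∀ u v : ℕ, wedge p u v = wedge p v u) ∧
    (∀ u v w : ℕ, wedge p (wedge p u v) w = wedge p u (wedge p v w)) ∧
    (∀ u : ℕ, wedge p 1 u = u) ∧
    (∀ u : ℕ, wedge p u 1 = u) ∧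
    (∀ u : ℕ, wedge p 0 u = 0) ∧
    (∀ u : ℕ, wedge p u 0 = 0) ∧
    (∀ u v w : ℕ, wedge p (max u v) w = max (wedge p u w) (wedge p v w)) ∧
    (∀ u v w : ℕ, wedge p u (max v w) = max (wedge p u v) (wedge p u w)) := by
  have hmono : ∀ u u' v : ℕ, u ≤ u' → wedge p u v ≤ wedge p u' v :=
    fun u u' v h => wedge_mono_left hp h
  have hdistl : ∀ u v w : ℕ, wedge p (max u v) w = max (wedge p u w) (wedge p v w) := by
    intro u v w
    rcases le_total u v with h | h
    · rw [max_eq_right h, max_eq_right (hmono u v w h)]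
    · rw [max_eq_left h, max_eq_left (hmono v u w h)]
  refine ⟨fun u v => max_comm u v, fun u v w => max_assoc u v w, fun u => max_eq_right (by omega),
    wedge_comm' hp, wedge_assoc hp, wedge_one_left hp,
    fun u => by rw [wedge_comm' hp]; exact wedge_one_left hp u,
    wedge_zero_left p, wedge_zero_right p, hdistl, ?_⟩
  intro u v w
  rw [wedge_comm' hp, hdistl, wedge_comm' hp v u, wedge_comm' hp w u]
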